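/- For λ ∈ Γ_k, the sum of partial derivatives of σ_k^{1/k} satisfies Σ_{i=1}^n ∂(σ_k^{1/k})/∂λ_i (λ) ≥ C(n,k)^{1/k}. -/

import Mathlib

open Finset Polynomial

/-- The k-th elementary symmetric polynomial of λ ∈ ℝⁿ. -/
noncomputable def esymm (n k : ℕ) (lam : Fin n → ℝ) : ℝ :=
  ∑ s ∈ Finset.powersetCard k (Finset.univ : Finset (Fin n)), ∏ i ∈ s, lam i

/-- The Garding cone Γ_k. -/
def GammaCone (n k : ℕ) : Set (Fin n → ℝ) :=
  {lam | ∀ j, 1 ≤ j → j ≤ k → 0 < esymm n j lam}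



-- splits of derivative
lemma splits_derivative (p : ℝ[X]) (h : p.Splits) :
    (derivative p).Splits := by
  rw [splits_iff_card_roots] at h ⊢
  have h1 := p.card_roots_le_derivative
  have h2 := p.natDegree_derivative_le
  have h3 := (derivative p).card_roots'
  omega

lemma splits_iterate_derivative (p : ℝ[X]) (h : p.Splits) (m : ℕ) :
    (derivative^[m] p).Splits := by
  induction m with
  | zero => simpa
  | succ d ih => rw [Function.iterate_succ_apply']; exact splits_derivative _ ih

lemma splits_reverse (p : ℝ[X]) (h : p.Splits) :
    p.reverse.Splits := by
  rcases eq_or_ne p 0 with rfl | hp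
  · simpa using (Splits.zero (R := ℝ))
  have key : ∀ s : Multiset ℝ, ((s.map fun a => X - C a).prod).reverse.Splits := by
    intro s
    induction s using Multiset.induction with
    | empty => rw [Multiset.map_zero, Multiset.prod_zero, show (1:ℝ[X]) = C 1 by simp, reverse_C]; exact Splits.of_natDegree_le_one (by simp)
    | cons a s ih =>
      rw [Multiset.map_cons, Multiset.prod_cons, Polynomial.reverse_mul]
      · exact Splits.mul (Splits.of_natDegree_le_one
          (le_trans (reverse_natDegree_le _) (by simp [natDegree_X_sub_C]))) ih
      · have h1 : (X - C a).leadingCoeff = 1 := monic_X_sub_C a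
        have h2 : ((s.map fun a => X - C a).prod).leadingCoeff ≠ 0 := by
          rw [leadingCoeff_ne_zero]
          exact Multiset.prod_ne_zero (by simp [X_sub_C_ne_zero])
        simp [h1, h2]
  have hfac := h.eq_prod_roots
  rw [hfac, Polynomial.reverse_mul]
  · refine Splits.mul ?_ (key _)
    refine Splits.of_natDegree_le_one (le_trans (reverse_natDegree_le _) (by simp))
  · have h2 : ((p.roots.map fun a => X - C a).prod).leadingCoeff ≠ 0 := by
      rw [leadingCoeff_ne_zero]
      exact Multiset.prod_ne_zero (by simp [X_sub_C_ne_zero])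
    simp [leadingCoeff_ne_zero.2 hp, h2, leadingCoeff_ne_zero.2 (C_ne_zero.2 (leadingCoeff_ne_zero.2 hp)) ]

lemma discrim_of_splits (q : ℝ[X]) (hs : q.Splits) (hd : q.natDegree ≤ 2) :
    4 * (q.coeff 2 * q.coeff 0) ≤ q.coeff 1 ^ 2 := by
  by_cases h2 : q.coeff 2 = 0
  · simp [h2]; positivity
  · have hdeg : q.natDegree = 2 := le_antisymm hd (le_natDegree_of_ne_zero h2)
    have hne : q.degree ≠ 0 := by
      rw [degree_eq_natDegree (fun h0 => by simp [h0] at h2), hdeg]; decide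
    obtain ⟨x, hx⟩ : ∃ x, eval₂ (RingHom.id ℝ) x q = 0 := hs.exists_eval_eq_zero hne
    rw [show eval₂ (RingHom.id ℝ) x q = q.eval x from by simp [eval₂_eq_eval_map]] at hx
    have hev : q.coeff 0 + q.coeff 1 * x + q.coeff 2 * x ^ 2 = 0 := by
      have := Polynomial.eval_eq_sum_range (R := ℝ) (p := q) x
      rw [hdeg] at this
      rw [hx] at this
      simp [Finset.sum_range_succ] at this
      linarith [this]
    have h4 : 4 * q.coeff 2 * (q.coeff 0 + q.coeff 1 * x + q.coeff 2 * x ^ 2) = 0 := by rw [hev]; ring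
    nlinarith [sq_nonneg (2 * q.coeff 2 * x + q.coeff 1), h4]

lemma dF1 (a : ℕ) : (1+a).descFactorial a = (a+1).factorial := by
  have h := Nat.descFactorial_self (a+1)
  rw [Nat.descFactorial_succ] at h
  rw [show 1+a = a+1 by omega]
  simpa using h

lemma dF2 (a : ℕ) : 2 * ((2+a).descFactorial a) = (a+2).factorial := by
  have h := Nat.descFactorial_self (a+2)
  rw [Nat.descFactorial_succ, Nat.descFactorial_succ,
    show a+2-(a+1) = 1 by omega, show a+2-a = 2 by omega] at h
  rw [show (2+a) = a+2 by omega]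
  omega

lemma hid_nat (i m : ℕ) :
    ((i+1)*(m+1)) * (4 * (((2+i).descFactorial i * m.descFactorial m) *
      (i.descFactorial i * (2+m).descFactorial m))) =
    ((1+i).descFactorial i * (1+m).descFactorial m)^2 * ((i+2)*(m+2)) := by
  rw [Nat.descFactorial_self, Nat.descFactorial_self, dF1, dF1]
  have h2i := dF2 i; have h2m := dF2 m
  have e1 : ((i+1)*(m+1)) * (4 * (((2+i).descFactorial i * m.factorial) *
      (i.factorial * (2+m).descFactorial m))) =
      ((i+1)*(m+1)) * ((2 * ((2+i).descFactorial i)) * m.factorial *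
      (i.factorial * (2 * ((2+m).descFactorial m)))) := by ring
  rw [e1, h2i, h2m]
  simp only [Nat.factorial_succ]
  ring

-- coefficient lemma
lemma coeff_prod_lam (n : ℕ) (lam : Fin n → ℝ) {s : ℕ} (hs : s ≤ n) :
    (∏ i : Fin n, (X + C (lam i))).coeff s = esymm n (n - s) lam := by
  have := Finset.prod_X_add_C_coeff (Finset.univ : Finset (Fin n)) lam
    (k := s) (by simpa using hs)
  simpa [esymm] using this

lemma newton_esymm (n i : ℕ) (hi : i + 2 ≤ n) (lam : Fin n → ℝ) :
    (((i+2) * (n-i) : ℕ) : ℝ) * (esymm n i lam * esymm n (i+2) lam) ≤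
      (((i+1) * (n-i-1) : ℕ) : ℝ) * esymm n (i+1) lam ^ 2 := by
  obtain ⟨m, rfl⟩ : ∃ m, n = i + 2 + m := ⟨n - (i+2), by omega⟩
  rw [show i+2+m-i = m+2 by omega, show m+2-1 = m+1 by omega]
  set f : ℝ[X] := ∏ j : Fin (i+2+m), (X + C (lam j)) with hf
  have hmono : f.Monic := monic_prod_of_monic _ _ (fun j _ => monic_X_add_C _)
  have hdeg : f.natDegree = i+2+m := by
    rw [hf, natDegree_prod _ _ (fun j _ => (monic_X_add_C (lam j)).ne_zero)]
    simp
  have hsplits : f.Splits := Splits.prod (fun j _ =>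
    Splits.of_natDegree_le_one (by simp [natDegree_X_add_C]))
  set h : ℝ[X] := derivative^[m] f with hh
  have hhs : h.Splits := splits_iterate_derivative _ hsplits m
  have hhco : ∀ t, h.coeff t = ((t+m).descFactorial m : ℝ) * f.coeff (t+m) := by
    intro t
    rw [hh, Polynomial.coeff_iterate_derivative, nsmul_eq_mul]
  have hhdeg : h.natDegree = i + 2 := by
    refine le_antisymm (le_trans (natDegree_iterate_derivative f m) (by omega)) ?_
    refine le_natDegree_of_ne_zero ?_
    rw [hhco]
    have h1 : f.coeff (i+2+m) = 1 := by rw [show (i+2+m) = f.natDegree from hdeg.symm]; exact hmono.coeff_natDegree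
    rw [h1, mul_one]
    have hne : (i+2+m).descFactorial m ≠ 0 := by
      simp only [ne_eq, Nat.descFactorial_eq_zero_iff_lt]; omega
    exact_mod_cast hne
  set q : ℝ[X] := derivative^[i] h.reverse with hq
  have hqs : q.Splits :=
    splits_iterate_derivative _ (splits_reverse _ hhs) i
  have hqdeg : q.natDegree ≤ 2 := by
    refine le_trans (natDegree_iterate_derivative _ i) ?_
    have := h.reverse_natDegree_le
    omega
  have hrev : ∀ t, t ≤ i+2 → h.reverse.coeff t = h.coeff (i+2-t) := by
    intro t ht
    rw [Polynomial.coeff_reverse, hhdeg, revAt_le ht]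
  have hqco : ∀ t, q.coeff t = ((t+i).descFactorial i : ℝ) * h.reverse.coeff (t+i) := by
    intro t
    rw [hq, Polynomial.coeff_iterate_derivative, nsmul_eq_mul]
  have hq0 : q.coeff 0 = ((i.descFactorial i * (2+m).descFactorial m : ℕ) : ℝ) *
      esymm (i+2+m) i lam := by
    rw [hqco, zero_add, hrev i (by omega), show i+2-i = 2 by omega, hhco, hf,
      coeff_prod_lam (i+2+m) lam (s := 2+m) (by omega), show i+2+m - (2+m) = i by omega]
    push_cast; ring
  have hq1 : q.coeff 1 = (((1+i).descFactorial i * (1+m).descFactorial m : ℕ) : ℝ) *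
      esymm (i+2+m) (i+1) lam := by
    rw [hqco, hrev (1+i) (by omega), show i+2-(1+i) = 1 by omega, hhco, hf,
      coeff_prod_lam (i+2+m) lam (s := 1+m) (by omega), show i+2+m - (1+m) = i+1 by omega]
    push_cast; ring
  have hq2 : q.coeff 2 = (((2+i).descFactorial i * m.descFactorial m : ℕ) : ℝ) *
      esymm (i+2+m) (i+2) lam := by
    rw [hqco, hrev (2+i) (by omega), show i+2-(2+i) = 0 by omega, hhco, hf,
      coeff_prod_lam (i+2+m) lam (s := 0+m) (by omega), show i+2+m - (0+m) = i+2 by omega]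
    push_cast; ring
  have hE := discrim_of_splits q hqs hqdeg
  rw [hq0, hq1, hq2] at hE
  have hid := hid_nat i m
  have hidR : (((i:ℝ)+1)*((m:ℝ)+1)) * (4 * ((((2+i).descFactorial i * m.descFactorial m : ℕ):ℝ) *
      ((i.descFactorial i * (2+m).descFactorial m : ℕ):ℝ))) =
      ((((1+i).descFactorial i * (1+m).descFactorial m : ℕ):ℝ))^2 * (((i:ℝ)+2)*((m:ℝ)+2)) := by
    exact_mod_cast congrArg (Nat.cast : ℕ → ℝ) hid
  set d0 : ℝ := ((i.descFactorial i * (2+m).descFactorial m : ℕ):ℝ)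
  set d1 : ℝ := (((1+i).descFactorial i * (1+m).descFactorial m : ℕ):ℝ)
  set d2 : ℝ := (((2+i).descFactorial i * m.descFactorial m : ℕ):ℝ)
  have hd1 : 0 < d1 := by
    show (0:ℝ) < (((1+i).descFactorial i * (1+m).descFactorial m : ℕ) : ℝ)
    have : 0 < (1+i).descFactorial i * (1+m).descFactorial m :=
      Nat.mul_pos (Nat.pos_of_ne_zero (by simp only [ne_eq, Nat.descFactorial_eq_zero_iff_lt]; omega))
        (Nat.pos_of_ne_zero (by simp only [ne_eq, Nat.descFactorial_eq_zero_iff_lt]; omega))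
    exact_mod_cast this
  have hfin := mul_le_mul_of_nonneg_left hE
    (show (0:ℝ) ≤ ((i:ℝ)+1)*((m:ℝ)+1) by positivity)
  refine le_of_mul_le_mul_left ?_ (show (0:ℝ) < d1^2 by positivity)
  push_cast
  calc d1^2 * ((((i:ℝ)+2)*((m:ℝ)+2)) * (esymm (i+2+m) i lam * esymm (i+2+m) (i+2) lam))
      = (((i:ℝ)+1)*((m:ℝ)+1)) * (4 * (d2 * esymm (i+2+m) (i+2) lam * (d0 * esymm (i+2+m) i lam))) := by
        linear_combination (-(esymm (i+2+m) i lam * esymm (i+2+m) (i+2) lam)) * hidR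
    _ ≤ (((i:ℝ)+1)*((m:ℝ)+1)) * (d1 * esymm (i+2+m) (i+1) lam)^2 := hfin
    _ = d1^2 * ((((i:ℝ)+1)*((m:ℝ)+1)) * esymm (i+2+m) (i+1) lam ^ 2) := by ring

lemma esymm_zero' (n : ℕ) (lam : Fin n → ℝ) : esymm n 0 lam = 1 := by
  simp [esymm]

lemma choose_id_nat (n i : ℕ) (hi : i + 2 ≤ n) :
    ((i+1) * (n-i-1)) * (n.choose (i+1))^2 =
      ((i+2)*(n-i)) * (n.choose i * n.choose (i+2)) := by
  have e1 := Nat.choose_succ_right_eq n i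
  have e2 := Nat.choose_succ_right_eq n (i+1)
  rw [show n - (i+1) = n-i-1 by omega] at e2
  calc ((i+1) * (n-i-1)) * (n.choose (i+1))^2
      = (n.choose (i+1) * (i+1)) * (n.choose (i+1) * (n-i-1)) := by ring
    _ = (n.choose i * (n-i)) * (n.choose (i+2) * (i+2)) := by rw [e1, ← e2]
    _ = ((i+2)*(n-i)) * (n.choose i * n.choose (i+2)) := by ring

lemma newton_p (n i : ℕ) (hi : i + 2 ≤ n) (lam : Fin n → ℝ) :
    (esymm n i lam / (n.choose i : ℝ)) * (esymm n (i+2) lam / (n.choose (i+2) : ℝ)) ≤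
      (esymm n (i+1) lam / (n.choose (i+1) : ℝ))^2 := by
  have hc0 : (0:ℝ) < (n.choose i : ℝ) := by exact_mod_cast Nat.choose_pos (by omega)
  have hc1 : (0:ℝ) < (n.choose (i+1) : ℝ) := by exact_mod_cast Nat.choose_pos (by omega)
  have hc2 : (0:ℝ) < (n.choose (i+2) : ℝ) := by exact_mod_cast Nat.choose_pos (by omega)
  rw [div_mul_div_comm, div_pow, div_le_div_iff₀ (by positivity) (by positivity)]
  have hN := newton_esymm n i hi lam
  have hidC : (((i+1) * (n-i-1)) * (n.choose (i+1))^2 : ℕ) =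
      (((i+2)*(n-i)) * (n.choose i * n.choose (i+2)) : ℕ) := choose_id_nat n i hi
  have hidCR : ((((i+1) * (n-i-1)) * (n.choose (i+1))^2 : ℕ) : ℝ) =
      ((((i+2)*(n-i)) * (n.choose i * n.choose (i+2)) : ℕ) : ℝ) := by exact_mod_cast hidC
  have hpos : (0:ℝ) < (((i+1) * (n-i-1) : ℕ) : ℝ) := by
    have : 0 < (i+1) * (n-i-1) := Nat.mul_pos (by omega) (by omega)
    exact_mod_cast this
  have h1 := mul_le_mul_of_nonneg_left hN
    (show (0:ℝ) ≤ (n.choose i : ℝ) * (n.choose (i+2) : ℝ) by positivity)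
  refine le_of_mul_le_mul_left ?_ hpos
  push_cast at hidCR h1 ⊢
  calc ((i:ℝ)+1) * (↑(n-i-1)) * (esymm n i lam * esymm n (i+2) lam * ((n.choose (i+1):ℝ))^2)
      = (n.choose i : ℝ) * (n.choose (i+2) : ℝ) *
        (((i:ℝ)+2) * (↑(n-i)) * (esymm n i lam * esymm n (i+2) lam)) := by
        linear_combination (esymm n i lam * esymm n (i+2) lam) * hidCR
    _ ≤ (n.choose i : ℝ) * (n.choose (i+2) : ℝ) *
        (((i:ℝ)+1) * (↑(n-i-1)) * esymm n (i+1) lam ^ 2) := h1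
    _ = ((i:ℝ)+1) * (↑(n-i-1)) * (esymm n (i+1) lam ^ 2 * ((n.choose i:ℝ) * (n.choose (i+2):ℝ))) := by
        ring

lemma maclaurin (n l : ℕ) (hln : l + 1 ≤ n) (lam : Fin n → ℝ)
    (hpos : ∀ j, 1 ≤ j → j ≤ l+1 → 0 < esymm n j lam) :
    (esymm n (l+1) lam / (n.choose (l+1) : ℝ))^l ≤ (esymm n l lam / (n.choose l : ℝ))^(l+1) := by
  have hp : ∀ j, j ≤ l+1 → 0 < esymm n j lam / (n.choose j : ℝ) := by
    intro j hj
    have hc : (0:ℝ) < (n.choose j : ℝ) := by exact_mod_cast Nat.choose_pos (by omega)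
    rcases Nat.eq_zero_or_pos j with rfl | hj1
    · rw [esymm_zero']; positivity
    · exact div_pos (hpos j hj1 hj) hc
  have claim : ∀ j, j ≤ l →
      (esymm n (j+1) lam / (n.choose (j+1) : ℝ))^j ≤ (esymm n j lam / (n.choose j : ℝ))^(j+1) := by
    intro j
    induction j with
    | zero =>
      intro _
      simp [esymm_zero']
    | succ j ih =>
      intro hjl
      have IH := ih (by omega)
      have hnew := newton_p n j (by omega) lam
      set a := esymm n j lam / (n.choose j : ℝ)
      set b := esymm n (j+1) lam / (n.choose (j+1) : ℝ)
      set c := esymm n (j+2) lam / (n.choose (j+2) : ℝ)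
      have ha : 0 < a := hp j (by omega)
      have hb : 0 < b := hp (j+1) (by omega)
      have hc : 0 < c := hp (j+2) (by omega)
      -- goal : c^(j+1) ≤ b^(j+2)
      refine le_of_mul_le_mul_right ?_ (show (0:ℝ) < a^(j+1) by positivity)
      calc c^(j+1) * a^(j+1) = (a*c)^(j+1) := by rw [mul_pow]; ring
        _ ≤ (b^2)^(j+1) := pow_le_pow_left₀ (by positivity) hnew (j+1)
        _ = b^(j+2) * b^j := by rw [← pow_mul, ← pow_add]; congr 1; omega
        _ ≤ b^(j+2) * a^(j+1) := mul_le_mul_of_nonneg_left IH (by positivity)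
  exact claim l le_rfl

lemma sum_update_esymm (n k : ℕ) (hk : k ≤ n) (lam : Fin n → ℝ) :
    ∑ i : Fin n, esymm n k (Function.update lam i 0) = ((n - k : ℕ) : ℝ) * esymm n k lam := by
  simp only [esymm]
  rw [Finset.sum_comm]
  rw [Finset.mul_sum]
  refine Finset.sum_congr rfl fun s hs => ?_
  have hcard : s.card = k := (Finset.mem_powersetCard.mp hs).2
  have key : ∀ i : Fin n, (∏ j ∈ s, Function.update lam i 0 j) =
      if i ∈ s then 0 else ∏ j ∈ s, lam j := by
    intro i
    by_cases hi : i ∈ s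
    · rw [if_pos hi]
      exact Finset.prod_eq_zero hi (by simp)
    · rw [if_neg hi]
      refine Finset.prod_congr rfl fun j hj => Function.update_of_ne ?_ _ _
      rintro rfl
      exact hi hj
  rw [Finset.sum_congr rfl fun i _ => key i]
  rw [Finset.sum_ite, Finset.sum_const_zero, Finset.sum_const, zero_add, nsmul_eq_mul]
  congr 1
  have : (Finset.univ.filter (fun i => i ∉ s)).card = n - k := by
    rw [Finset.filter_not, Finset.card_sdiff_of_subset (by simp [Finset.subset_univ])]
    simp [hcard, Finset.filter_mem_eq_inter]
  exact_mod_cast congrArg (Nat.cast : ℕ → ℝ) this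

/-- Σ_i ∂(σ_k^{1/k})/∂λ_i ≥ C(n,k)^{1/k}, where
∂(σ_k^{1/k})/∂λ_i = (1/k) σ_k^{1/k-1} σ_{k-1}(λ|i). -/
theorem sum_derivatives_lower_bound (n k : ℕ) (hk1 : 1 ≤ k) (hkn : k ≤ n)
    (lam : Fin n → ℝ) (hlam : lam ∈ GammaCone n k) :
    (n.choose k : ℝ) ^ ((1 : ℝ) / k) ≤
      ∑ i : Fin n, (1 / (k : ℝ)) * esymm n k lam ^ ((1 : ℝ) / k - 1) *
        esymm n (k - 1) (Function.update lam i 0) := by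
  obtain ⟨l, rfl⟩ : ∃ l, k = l + 1 := ⟨k - 1, by omega⟩
  simp only [Nat.add_sub_cancel]
  set σ : ℝ := esymm n (l+1) lam with hσdef
  set τ : ℝ := esymm n l lam with hτdef
  have hσ : 0 < σ := hlam (l+1) (by omega) le_rfl
  have hτ : 0 < τ := by
    rcases Nat.eq_zero_or_pos l with rfl | hl1
    · rw [hτdef, esymm_zero']; norm_num
    · exact hlam l hl1 (by omega)
  have hC : (0:ℝ) < (n.choose (l+1) : ℝ) := by exact_mod_cast Nat.choose_pos hkn
  have hCm : (0:ℝ) < (n.choose l : ℝ) := by exact_mod_cast Nat.choose_pos (by omega)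
  set W : ℝ := ((n - l : ℕ) : ℝ) with hWdef
  have hW : 0 < W := by
    have h0 : 0 < n - l := by omega
    rw [hWdef]
    exact_mod_cast h0
  -- rewrite the sum
  have hsum : ∑ i : Fin n, (1 / ((l+1) : ℝ)) * σ ^ ((1 : ℝ) / (l+1) - 1) *
      esymm n l (Function.update lam i 0)
      = (1 / ((l+1) : ℝ)) * σ ^ ((1 : ℝ) / (l+1) - 1) * (W * τ) := by
    rw [← Finset.mul_sum, sum_update_esymm n l (by omega) lam]
  push_cast at hsum ⊢
  rw [hsum]
  set y : ℝ := σ ^ ((1 : ℝ) / (l+1)) with hydef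
  have hy : 0 < y := Real.rpow_pos_of_pos hσ _
  have hyk : y ^ (l+1) = σ := by
    rw [hydef, ← Real.rpow_natCast (σ ^ ((1:ℝ)/((l:ℝ)+1))) (l+1), ← Real.rpow_mul hσ.le]
    rw [show ((l+1:ℕ):ℝ) = (l:ℝ)+1 by push_cast; ring]
    rw [one_div, inv_mul_cancel₀ (by positivity), Real.rpow_one]
  have hexp : σ ^ ((1 : ℝ) / (l+1) - 1) = y / σ := by
    rw [Real.rpow_sub hσ, Real.rpow_one, hydef]
  rw [hexp]
  set X : ℝ := 1 / ((l:ℝ)+1) * (y / σ) * (W * τ) with hXdef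
  have hX : 0 < X := by positivity
  set z : ℝ := (n.choose (l+1) : ℝ) ^ ((1 : ℝ) / ((l:ℝ)+1)) with hzdef
  have hz : 0 < z := Real.rpow_pos_of_pos hC _
  have hzk : z ^ (l+1) = (n.choose (l+1) : ℝ) := by
    rw [hzdef, ← Real.rpow_natCast ((n.choose (l+1):ℝ) ^ ((1:ℝ)/((l:ℝ)+1))) (l+1),
      ← Real.rpow_mul hC.le]
    rw [show ((l+1 : ℕ):ℝ) = (l:ℝ)+1 by push_cast; ring]
    rw [one_div, inv_mul_cancel₀ (by positivity), Real.rpow_one]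
  have hgoal : z ≤ X := by
    refine le_of_pow_le_pow_left₀ (n := l+1) (by omega) hX.le ?_
    rw [hzk]
    have hys : (y/σ)^(l+1) = 1/σ^l := by
      rw [div_pow, hyk, pow_succ]
      field_simp
    have hXk : X ^ (l+1) = W^(l+1) * τ^(l+1) / (((l:ℝ)+1)^(l+1) * σ^l) := by
      rw [hXdef, mul_pow, mul_pow, hys, div_pow, one_pow]
      field_simp
      ring
    rw [hXk, le_div_iff₀ (by positivity)]
    -- goal : ↑C * (((l:ℝ)+1)^(l+1) * σ^l) ≤ W^(l+1) * τ^(l+1)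
    have hM := maclaurin n l hkn lam (fun j h1 h2 => hlam j h1 h2)
    have hM' : σ^l * (n.choose l : ℝ)^(l+1) ≤ τ^(l+1) * (n.choose (l+1) : ℝ)^l := by
      rw [div_pow, div_pow, div_le_div_iff₀ (by positivity) (by positivity)] at hM
      linarith [hM]
    have hWC : W * (n.choose l : ℝ) = ((l:ℝ)+1) * (n.choose (l+1) : ℝ) := by
      have := Nat.choose_succ_right_eq n l
      have : ((n.choose (l+1) * (l+1) : ℕ) : ℝ) = ((n.choose l * (n - l) : ℕ) : ℝ) := by
        exact_mod_cast congrArg (Nat.cast : ℕ → ℝ) this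
      push_cast at this
      rw [hWdef]
      linarith [this]
    refine le_of_mul_le_mul_right ?_ (show (0:ℝ) < (n.choose l : ℝ)^(l+1) by positivity)
    calc (n.choose (l+1) : ℝ) * (((l:ℝ)+1)^(l+1) * σ^l) * (n.choose l : ℝ)^(l+1)
        = ((n.choose (l+1) : ℝ) * ((l:ℝ)+1)^(l+1)) * (σ^l * (n.choose l : ℝ)^(l+1)) := by ring
      _ ≤ ((n.choose (l+1) : ℝ) * ((l:ℝ)+1)^(l+1)) * (τ^(l+1) * (n.choose (l+1) : ℝ)^l) := by
          refine mul_le_mul_of_nonneg_left hM' (by positivity)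
      _ = (((l:ℝ)+1) * (n.choose (l+1) : ℝ))^(l+1) * τ^(l+1) := by
          rw [mul_pow]; ring
      _ = (W * (n.choose l : ℝ))^(l+1) * τ^(l+1) := by rw [hWC]
      _ = W^(l+1) * τ^(l+1) * (n.choose l : ℝ)^(l+1) := by rw [mul_pow]; ring
  exact hgoal
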